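/- Fix real numbers α > 0, β > 0, and R > 0, and set γ_R = α·γ_D and γ_E = (α/β)·γ_D (so that γ_R = α·γ_D = β·γ_E). Then (i) lim_{γ_D → ∞} 𝒫₂(α·γ_D, γ_D, (α/β)·γ_D, R) = 𝒫₂^lim := 1 − 1/(1 + (1/β)·2^R), and (ii) lim_{γ_D → ∞} γ_D · (𝒫₂(α·γ_D, γ_D, (α/β)·γ_D, R) − 𝒫₂^lim) = 𝓜̂₂ := (2^R − 1)(1 + 1/α) / (1 + (1/β)·2^R). -/

import Mathlib

open Filter Real

/-- Case II closed-form secrecy outage probability. -/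
noncomputable def P2 (γR γD γE R : ℝ) : ℝ :=
  1 - Real.exp (-((2 : ℝ) ^ R - 1) / γD - ((2 : ℝ) ^ R - 1) / γR) *
    (1 + ((2 : ℝ) ^ R / γR) * γE)⁻¹

/-- Theorem 6 (Case II, second high-SNR scenario): with `γ_R = α·γ_D = β·γ_E → ∞`,
(i) `𝒫₂ → 𝒫₂^lim = 1 − 1/(1 + (1/β)·2^R)` and
(ii) `γ_D·(𝒫₂ − 𝒫₂^lim) → 𝓜̂₂ = (2^R − 1)(1 + 1/α)/(1 + (1/β)·2^R)`. -/
theorem case2_asymptotic_proportional (α β R : ℝ) (hα : 0 < α) (hβ : 0 < β) (hR : 0 < R) :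
    Tendsto (fun γD : ℝ => P2 (α * γD) γD ((α / β) * γD) R) atTop
      (nhds (1 - (1 + (1 / β) * (2 : ℝ) ^ R)⁻¹)) ∧
    Tendsto (fun γD : ℝ =>
        γD * (P2 (α * γD) γD ((α / β) * γD) R - (1 - (1 + (1 / β) * (2 : ℝ) ^ R)⁻¹)))
      atTop
      (nhds (((2 : ℝ) ^ R - 1) * (1 + 1 / α) / (1 + (1 / β) * (2 : ℝ) ^ R))) := by
  set K : ℝ := (2 : ℝ) ^ R with hK
  have hK1 : 1 < K := by
    rw [hK]
    calc (1 : ℝ) = (2:ℝ) ^ (0:ℝ) := by simp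
    _ < (2:ℝ) ^ R := by
        apply Real.rpow_lt_rpow_left_iff (by norm_num : (1:ℝ) < 2) |>.mpr hR
  set A : ℝ := (1 + (1 / β) * K)⁻¹ with hA
  set t : ℝ := (K - 1) * (1 + 1 / α) with ht
  have ht0 : 0 < t := by
    apply mul_pos (by linarith)
    have : 0 < 1 / α := by positivity
    linarith
  -- eventual rewriting of P2
  have heq : ∀ᶠ x in atTop, P2 (α * x) x ((α / β) * x) R = 1 - Real.exp (-(t / x)) * A := by
    filter_upwards [eventually_gt_atTop (0:ℝ)] with x hx
    have hx0 : x ≠ 0 := ne_of_gt hx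
    have hα0 : α ≠ 0 := ne_of_gt hα
    have hβ0 : β ≠ 0 := ne_of_gt hβ
    have h1 : -(K - 1) / x - (K - 1) / (α * x) = -(t / x) := by
      rw [ht]; field_simp; ring
    have h2 : 1 + (K / (α * x)) * ((α / β) * x) = 1 + (1 / β) * K := by
      field_simp
    simp only [P2, ← hK, h1, h2, ← hA]
  have hdiv : Tendsto (fun x : ℝ => -(t / x)) atTop (nhds 0) := by
    have := (tendsto_inv_atTop_zero (𝕜 := ℝ)).const_mul t
    simp only [mul_zero] at this
    have h := this.neg
    simp only [neg_zero] at h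
    refine h.congr fun x => by rw [div_eq_mul_inv]
  have hexp : Tendsto (fun x : ℝ => Real.exp (-(t / x))) atTop (nhds 1) := by
    have := (Real.continuous_exp.tendsto 0).comp hdiv
    simpa [Function.comp_def] using this
  have part1 : Tendsto (fun x : ℝ => 1 - Real.exp (-(t / x)) * A) atTop (nhds (1 - A)) := by
    have := (tendsto_const_nhds (x := (1:ℝ)) (f := atTop)).sub (hexp.mul (tendsto_const_nhds (x := A)))
    simpa using this
  constructor
  · exact part1.congr' (by filter_upwards [heq] with x hx; rw [hx])
  · -- slope lemma
    have hslope : Tendsto (fun u : ℝ => (Real.exp u - 1) / u) (nhdsWithin 0 {(0:ℝ)}ᶜ)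
        (nhds 1) := by
      have h := (Real.hasDerivAt_exp 0)
      rw [hasDerivAt_iff_tendsto_slope] at h
      simp only [Real.exp_zero] at h
      refine h.congr fun u => ?_
      simp [slope_def_field, div_eq_mul_inv, mul_comm]
    have hcomp : Tendsto (fun x : ℝ => -(t / x)) atTop (nhdsWithin 0 {(0:ℝ)}ᶜ) := by
      rw [tendsto_nhdsWithin_iff]
      refine ⟨hdiv, ?_⟩
      filter_upwards [eventually_gt_atTop (0:ℝ)] with x hx
      have : 0 < t / x := div_pos ht0 hx
      simp only [Set.mem_compl_iff, Set.mem_singleton_iff]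
      intro h
      rw [neg_eq_zero] at h
      exact (ne_of_gt this) h
    have hmain : Tendsto (fun x : ℝ =>
        (t * A) * ((Real.exp (-(t / x)) - 1) / (-(t / x)))) atTop (nhds (t * A)) := by
      have := (hslope.comp hcomp).const_mul (t * A)
      simpa using this
    have htarget : (K - 1) * (1 + 1 / α) / (1 + (1 / β) * K) = t * A := by
      rw [ht, hA, div_eq_mul_inv]
    rw [htarget]
    clear_value K A t
    refine hmain.congr' ?_
    filter_upwards [heq, eventually_gt_atTop (0:ℝ)] with x hx hx0
    have hxne : x ≠ 0 := ne_of_gt hx0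
    have htx : t / x ≠ 0 := by positivity
    rw [hx]
    have : (1 - Real.exp (-(t / x)) * A) - (1 - A) = A * (1 - Real.exp (-(t / x))) := by ring
    have htne : t ≠ 0 := ne_of_gt ht0
    rw [this, div_neg, ← neg_div, neg_sub, div_div_eq_mul_div]
    rw [show t * A * ((1 - Real.exp (-(t / x))) * x / t)
        = A * (t * ((1 - Real.exp (-(t / x))) * x) / t) by ring]
    rw [mul_div_cancel_left₀ _ htne]
    ring
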